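/- Let M and V be compact metric spaces and suppose there exists ε > 0 such that any two continuous maps from M to V that are 4ε-close are homotopic. For each k ∈ ℕ let N_k be a metric space, f_k : M → N_k a continuous map, and h_k : V → N_k a topological embedding with f_k(M) ⊆ h_k(V). Assume that the sequence (f_k) is almost equicontinuous and that the sequence of inverse maps (h_k⁻¹ : h_k(V) → V) is almost equicontinuous. Then the continuous maps h_k⁻¹ ∘ f_k : M → V fall into finitely many homotopy classes; consequently, there is a finite set F ⊆ ℕ such that for every k ∈ ℕ there exists j ∈ F with f_k homotopic, as a map M → N_k, to h_k ∘ h_j⁻¹ ∘ f_j. -/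

import Mathlib

/-- A sequence of maps `f k : X k → Y k` between metric spaces is `ε`-equicontinuous if there
is a common `δ > 0` such that all the maps move `δ`-close points to `ε`-close points. -/
def IsEquicontFamily {X Y : ℕ → Type*} [∀ k, MetricSpace (X k)] [∀ k, MetricSpace (Y k)]
    (I : Set ℕ) (f : ∀ k, X k → Y k) (ε : ℝ) : Prop :=
  ∃ δ > 0, ∀ k ∈ I, ∀ x x' : X k, dist x x' < δ → dist (f k x) (f k x') < ε

/-- A sequence of maps `f k : X k → Y k` between metric spaces is almost equicontinuous if
for every `ε > 0` there is a finite set `F ⊆ ℕ` such that the subfamily indexed by `ℕ \ F`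
is `ε`-equicontinuous. -/
def IsAlmostEquicont {X Y : ℕ → Type*} [∀ k, MetricSpace (X k)] [∀ k, MetricSpace (Y k)]
    (f : ∀ k, X k → Y k) : Prop :=
  ∀ ε > 0, ∃ F : Finset ℕ, IsEquicontFamily ((F : Set ℕ)ᶜ) f ε

/-- Let `M`, `V` be compact metric spaces such that for some `ε > 0` any two `4ε`-close
continuous maps `M → V` are homotopic.  For each `k` let `f k : M → N k` be continuous,
`h k : V → N k` a topological embedding with `f k '' M ⊆ h k '' V`; here `φ k : M → V` is
the map `(h k)⁻¹ ∘ f k` and `ψ k : h k '' V → V` is the inverse of `h k`.  If `(f k)` is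
almost equicontinuous and the inverse maps `(ψ k)` are almost equicontinuous, then the maps
`φ k = (h k)⁻¹ ∘ f k` fall into finitely many homotopy classes; consequently there is a
finite `F ⊆ ℕ` such that every `f k` is homotopic to `h k ∘ (h j)⁻¹ ∘ f j` for some `j ∈ F`. -/
theorem finitely_many_classes_of_almost_equicont_into_bounded_geometry
    {M V : Type*} [MetricSpace M] [CompactSpace M] [MetricSpace V] [CompactSpace V]
    {N : ℕ → Type*} [∀ k, MetricSpace (N k)]
    (ε : ℝ) (hε : 0 < ε)
    (hclose : ∀ f g : C(M, V), (∀ x, dist (f x) (g x) ≤ 4 * ε) → f.Homotopic g)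
    (f : ∀ k, C(M, N k)) (h : ∀ k, V → N k)
    (hemb : ∀ k, Topology.IsEmbedding (h k))
    (ψ : ∀ k, (Set.range (h k) : Set (N k)) → V)
    (hψ : ∀ (k : ℕ) (v : V), ψ k ⟨h k v, Set.mem_range_self v⟩ = v)
    (φ : ∀ k, M → V) (hφ : ∀ (k : ℕ) (x : M), h k (φ k x) = f k x)
    (hφc : ∀ k, Continuous (φ k))
    (hfae : IsAlmostEquicont (X := fun _ => M) (Y := N) (fun k => ⇑(f k)))
    (hψae : IsAlmostEquicont (X := fun k => (Set.range (h k) : Set (N k)))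
      (Y := fun _ => V) ψ) :
    (∃ F : Finset ℕ, ∀ k : ℕ, ∃ j ∈ F,
        (⟨φ k, hφc k⟩ : C(M, V)).Homotopic ⟨φ j, hφc j⟩) ∧
      ∃ F : Finset ℕ, ∀ k : ℕ, ∃ j ∈ F,
        (f k).Homotopic
          ((⟨h k, (hemb k).continuous⟩ : C(V, N k)).comp ⟨φ j, hφc j⟩) := by
  classical
  obtain ⟨F₁, δ₁, hδ₁, H₁⟩ := hψae ε hε
  obtain ⟨F₂, δ₂, hδ₂, H₂⟩ := hfae δ₁ hδ₁
  set F₀ : Finset ℕ := F₁ ∪ F₂ with hF₀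
  -- the maps φ k, k ∉ F₀, have common modulus (δ₂, ε)
  have key : ∀ k ∉ F₀, ∀ x x' : M, dist x x' < δ₂ → dist (φ k x) (φ k x') < ε := by
    intro k hk x x' hxx
    have hk1 : k ∈ ((F₁ : Set ℕ))ᶜ := fun h' => hk (Finset.mem_union_left _ h')
    have hk2 : k ∈ ((F₂ : Set ℕ))ᶜ := fun h' => hk (Finset.mem_union_right _ h')
    have hf : dist (f k x) (f k x') < δ₁ := H₂ k hk2 x x' hxx
    have hmem : ∀ y : M, f k y ∈ Set.range (h k) := fun y => ⟨φ k y, hφ k y⟩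
    have hd : dist (⟨f k x, hmem x⟩ : Set.range (h k)) ⟨f k x', hmem x'⟩ < δ₁ := by
      rw [Subtype.dist_eq]; exact hf
    have hpsi := H₁ k hk1 _ _ hd
    have e1 : ∀ y : M, ψ k ⟨f k y, hmem y⟩ = φ k y := by
      intro y
      have e : (⟨f k y, hmem y⟩ : Set.range (h k)) = ⟨h k (φ k y), Set.mem_range_self _⟩ :=
        Subtype.ext (hφ k y).symm
      rw [e, hψ]
    rwa [e1 x, e1 x'] at hpsi
  -- finite nets in M and V
  obtain ⟨s, hsfin, hscov⟩ :=
    Metric.totallyBounded_iff.mp (isCompact_univ (X := M)).totallyBounded δ₂ hδ₂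
  obtain ⟨t, htfin, htcov⟩ :=
    Metric.totallyBounded_iff.mp (isCompact_univ (X := V)).totallyBounded ε hε
  set sF : Finset M := hsfin.toFinset with hsF
  set tF : Finset V := htfin.toFinset with htF
  have hchoice : ∀ (k : ℕ) (x : M), ∃ v : ↥tF, dist (φ k x) (v : V) < ε := by
    intro k x
    have hx : φ k x ∈ ⋃ y ∈ t, Metric.ball y ε := htcov (Set.mem_univ _)
    simp only [Set.mem_iUnion, Metric.mem_ball] at hx
    obtain ⟨v, hv, hvd⟩ := hx
    exact ⟨⟨v, by simpa [htF] using hv⟩, hvd⟩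
  set σ : ℕ → (↥sF → ↥tF) := fun k x => (hchoice k (x : M)).choose with hσ
  have hσspec : ∀ (k : ℕ) (x : ↥sF), dist (φ k (x : M)) ((σ k x : V)) < ε :=
    fun k x => (hchoice k (x : M)).choose_spec
  -- representative for each "pattern"
  set g : (↥sF → ↥tF) → ℕ :=
    fun τ => if hτ : ∃ k, k ∉ F₀ ∧ σ k = τ then hτ.choose else 0 with hg
  set F : Finset ℕ := F₀ ∪ Finset.image g Finset.univ with hF
  -- two maps outside F₀ with the same pattern are 4ε-close
  have hclose4 : ∀ k ∉ F₀, ∀ j ∉ F₀, σ k = σ j →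
      ∀ x : M, dist (φ k x) (φ j x) ≤ 4 * ε := by
    intro k hk j hj hσkj x
    have hx : x ∈ ⋃ y ∈ s, Metric.ball y δ₂ := hscov (Set.mem_univ _)
    simp only [Set.mem_iUnion, Metric.mem_ball] at hx
    obtain ⟨x₀, hx₀s, hx₀d⟩ := hx
    set x₀F : ↥sF := ⟨x₀, by simpa [hsF] using hx₀s⟩
    have a1 : dist (φ k x) (φ k x₀) < ε := key k hk x x₀ hx₀d
    have a2 : dist (φ k x₀) ((σ k x₀F : V)) < ε := hσspec k x₀F
    have a3 : dist ((σ k x₀F : V)) (φ j x₀) < ε := by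
      rw [hσkj, dist_comm]; exact hσspec j x₀F
    have a4 : dist (φ j x₀) (φ j x) < ε := by
      rw [dist_comm]; exact key j hj x x₀ hx₀d
    have tri : dist (φ k x) (φ j x) ≤
        dist (φ k x) (φ k x₀) + dist (φ k x₀) ((σ k x₀F : V)) +
        dist ((σ k x₀F : V)) (φ j x₀) + dist (φ j x₀) (φ j x) := by
      calc dist (φ k x) (φ j x) ≤ dist (φ k x) ((σ k x₀F : V)) + dist ((σ k x₀F : V)) (φ j x₀)
            + dist (φ j x₀) (φ j x) := dist_triangle4 _ _ _ _
        _ ≤ _ := by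
            have := dist_triangle (φ k x) (φ k x₀) ((σ k x₀F : V)); linarith
    linarith
  -- main claim
  have main : ∀ k : ℕ, ∃ j ∈ F,
      (⟨φ k, hφc k⟩ : C(M, V)).Homotopic ⟨φ j, hφc j⟩ := by
    intro k
    by_cases hk : k ∈ F₀
    · exact ⟨k, Finset.mem_union_left _ hk, ContinuousMap.Homotopic.refl _⟩
    · have hex : ∃ k', k' ∉ F₀ ∧ σ k' = σ k := ⟨k, hk, rfl⟩
      have hgj : g (σ k) = hex.choose := dif_pos hex
      obtain ⟨hj0, hjσ⟩ := hex.choose_spec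
      refine ⟨g (σ k), Finset.mem_union_right _ (Finset.mem_image_of_mem g (Finset.mem_univ _)),
        ?_⟩
      rw [hgj]
      exact hclose (⟨φ k, hφc k⟩ : C(M, V)) ⟨φ hex.choose, hφc _⟩
        (hclose4 k hk hex.choose hj0 hjσ.symm)
  refine ⟨⟨F, main⟩, F, fun k => ?_⟩
  obtain ⟨j, hj, hhom⟩ := main k
  refine ⟨j, hj, ?_⟩
  have e : f k = (⟨h k, (hemb k).continuous⟩ : C(V, N k)).comp ⟨φ k, hφc k⟩ := by
    ext x
    simp [ContinuousMap.comp_apply, hφ]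
  rw [e]
  exact ContinuousMap.Homotopic.comp (ContinuousMap.Homotopic.refl _) hhom
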